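/- For every nonnegative integer n and arbitrary parameters p_n, q_n, the sum over k from 0 to n of L_k^{(alpha+p_n)}(x) L_{n-k}^{(-alpha-q_n)}(-x) equals (p_n - q_n + 2)_n / n!. -/

import Mathlib

noncomputable def poch (a : ℝ) (k : ℕ) : ℝ := ∏ m ∈ Finset.range k, (a + m)

noncomputable def lag (α : ℝ) (n : ℕ) (x : ℝ) : ℝ :=
  ∑ k ∈ Finset.range (n + 1),
    (-1) ^ k * (poch (α + k + 1) (n - k) / (n - k).factorial) * x ^ k / k.factorial

noncomputable def jacobi (α β : ℝ) (n : ℕ) (x : ℝ) : ℝ :=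
  ∑ k ∈ Finset.range (n + 1),
    poch ((n : ℝ) + α + β + 1) k * poch (α + k + 1) (n - k) /
      (k.factorial * (n - k).factorial) * ((x - 1) / 2) ^ k

noncomputable def charlier (a : ℝ) (n : ℕ) (x : ℝ) : ℝ :=
  ∑ m ∈ Finset.range (n + 1),
    (∏ j ∈ Finset.range m, (x - (j : ℝ))) / m.factorial * (-a) ^ (n - m) / (n - m).factorial

open Finset


lemma poch_succ (A : ℝ) (k : ℕ) : poch A (k+1) = poch A k * (A + k) := by
  simp [poch, Finset.prod_range_succ]

lemma vand' (A B : ℝ) (N : ℕ) :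
    ∑ r ∈ range (N+1), poch A r * poch B (N-r) * (N.choose r : ℝ) = poch (A+B) N := by
  induction N with
  | zero => simp [poch]
  | succ N ih =>
    have h1 : ∑ r ∈ range (N+2), poch A r * poch B (N+1-r) * ((N+1).choose r : ℝ)
        = (∑ r ∈ range (N+1), poch A (r+1) * poch B (N-r) * ((N+1).choose (r+1) : ℝ))
          + poch B (N+1) := by
      rw [Finset.sum_range_succ' (fun r => poch A r * poch B (N+1-r) * ((N+1).choose r : ℝ)) (N+1)]
      simp [poch]
    rw [h1]
    have h2 : ∀ r ∈ range (N+1),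
        poch A (r+1) * poch B (N-r) * ((N+1).choose (r+1) : ℝ)
        = poch A (r+1) * poch B (N-r) * (N.choose r : ℝ)
          + poch A (r+1) * poch B (N-r) * (N.choose (r+1) : ℝ) := by
      intro r _
      rw [Nat.choose_succ_succ]
      push_cast
      ring
    rw [Finset.sum_congr rfl h2, Finset.sum_add_distrib]
    have h3 : (∑ r ∈ range (N+1), poch A (r+1) * poch B (N-r) * (N.choose (r+1) : ℝ))
          + poch B (N+1)
        = ∑ r ∈ range (N+2), poch A r * poch B (N+1-r) * (N.choose r : ℝ) := by
      rw [Finset.sum_range_succ' (fun r => poch A r * poch B (N+1-r) * (N.choose r : ℝ)) (N+1)]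
      simp [poch]
    have h4 : ∑ r ∈ range (N+2), poch A r * poch B (N+1-r) * (N.choose r : ℝ)
        = ∑ r ∈ range (N+1), poch A r * poch B (N-r) * (B + (N-r : ℕ)) * (N.choose r : ℝ) := by
      rw [Finset.sum_range_succ]
      simp only [Nat.choose_succ_self, Nat.cast_zero, mul_zero, add_zero]
      apply Finset.sum_congr rfl
      intro r hr
      have hrN : r ≤ N := Nat.lt_succ_iff.mp (mem_range.mp hr)
      have : N + 1 - r = (N - r) + 1 := by omega
      rw [this, poch_succ]
      ring
    rw [add_assoc, h3, h4]
    have h5 : ∀ r ∈ range (N+1),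
        poch A (r+1) * poch B (N-r) * (N.choose r : ℝ)
          = (A + r) * (poch A r * poch B (N-r) * (N.choose r : ℝ)) := by
      intro r _; rw [poch_succ]; ring
    rw [Finset.sum_congr rfl h5]
    have h6 : ∀ r ∈ range (N+1),
        poch A r * poch B (N-r) * (B + (N-r : ℕ)) * (N.choose r : ℝ)
          = (B + N - r) * (poch A r * poch B (N-r) * (N.choose r : ℝ)) := by
      intro r hr
      have hrN : r ≤ N := Nat.lt_succ_iff.mp (mem_range.mp hr)
      have : ((N - r : ℕ) : ℝ) = (N : ℝ) - r := by
        rw [Nat.cast_sub hrN]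
      rw [this]; ring
    rw [Finset.sum_congr rfl h6, ← Finset.sum_add_distrib]
    have h7 : ∀ r ∈ range (N+1),
        (A + r) * (poch A r * poch B (N-r) * (N.choose r : ℝ))
          + (B + N - r) * (poch A r * poch B (N-r) * (N.choose r : ℝ))
        = (A + B + N) * (poch A r * poch B (N-r) * (N.choose r : ℝ)) := by
      intro r _; ring
    rw [Finset.sum_congr rfl h7, ← Finset.mul_sum, ih, poch_succ]
    ring

lemma vand (A B : ℝ) (N : ℕ) :
    ∑ r ∈ range (N+1), poch A r / r.factorial * (poch B (N-r) / (N-r).factorial)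
      = poch (A+B) N / N.factorial := by
  rw [eq_div_iff (by exact_mod_cast N.factorial_ne_zero : (N.factorial : ℝ) ≠ 0)]
  rw [← vand' A B N, Finset.sum_mul]
  apply Finset.sum_congr rfl
  intro r hr
  have hrN : r ≤ N := Nat.lt_succ_iff.mp (mem_range.mp hr)
  have h : (N.factorial : ℝ) = (N.choose r : ℝ) * r.factorial * (N-r).factorial := by
    exact_mod_cast (Nat.choose_mul_factorial_mul_factorial hrN).symm
  rw [h]
  have h1 : (r.factorial : ℝ) ≠ 0 := by exact_mod_cast r.factorial_ne_zero
  have h2 : ((N-r).factorial : ℝ) ≠ 0 := by exact_mod_cast (N-r).factorial_ne_zero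
  field_simp

lemma alt (m : ℕ) :
    ∑ i ∈ range (m+1), (-1:ℝ)^i / (i.factorial * (m-i).factorial)
      = (if m = 0 then 1 else 0) / m.factorial := by
  have key : ∑ i ∈ range (m+1), (-1:ℤ)^i * m.choose i = if m = 0 then 1 else 0 :=
    Int.alternating_sum_range_choose
  have key' : ∑ i ∈ range (m+1), (-1:ℝ)^i * m.choose i = if m = 0 then 1 else 0 := by
    exact_mod_cast congrArg (Int.cast : ℤ → ℝ) key
  rw [← key', Finset.sum_div]
  apply Finset.sum_congr rfl
  intro i hi
  have him : i ≤ m := Nat.lt_succ_iff.mp (mem_range.mp hi)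
  have h : (m.factorial : ℝ) = (m.choose i : ℝ) * i.factorial * (m-i).factorial := by
    exact_mod_cast (Nat.choose_mul_factorial_mul_factorial him).symm
  rw [h]
  have h1 : (i.factorial : ℝ) ≠ 0 := by exact_mod_cast i.factorial_ne_zero
  have h2 : ((m-i).factorial : ℝ) ≠ 0 := by exact_mod_cast (m-i).factorial_ne_zero
  have h3 : (m.choose i : ℝ) ≠ 0 := by
    exact_mod_cast (Nat.choose_pos him).ne'
  field_simp


lemma tri (n : ℕ) (f : ℕ → ℕ → ℕ → ℝ) :
    ∑ k ∈ range (n+1), ∑ i ∈ range (k+1), ∑ j ∈ range (n-k+1), f i (k-i) j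
    = ∑ m ∈ range (n+1), ∑ i ∈ range (m+1), ∑ r ∈ range (n-m+1), f i r (m-i) := by
  have e1 : ∑ k ∈ range (n+1), ∑ i ∈ range (k+1), ∑ j ∈ range (n-k+1), f i (k-i) j
      = ∑ p ∈ (range (n+1)).sigma (fun k => range (k+1) ×ˢ range (n-k+1)),
          f p.2.1 (p.1 - p.2.1) p.2.2 := by
    rw [Finset.sum_sigma]
    exact Finset.sum_congr rfl fun k _ =>
      (Finset.sum_product (range (k+1)) (range (n-k+1)) (fun b => f b.1 (k - b.1) b.2)).symm
  have e2 : ∑ m ∈ range (n+1), ∑ i ∈ range (m+1), ∑ r ∈ range (n-m+1), f i r (m-i)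
      = ∑ p ∈ (range (n+1)).sigma (fun m => range (m+1) ×ˢ range (n-m+1)),
          f p.2.1 p.2.2 (p.1 - p.2.1) := by
    rw [Finset.sum_sigma]
    exact Finset.sum_congr rfl fun m _ =>
      (Finset.sum_product (range (m+1)) (range (n-m+1)) (fun b => f b.1 b.2 (m - b.1))).symm
  rw [e1, e2]
  apply Finset.sum_nbij' (i := fun p => ⟨p.2.1 + p.2.2, (p.2.1, p.1 - p.2.1)⟩)
    (j := fun p => ⟨p.2.1 + p.2.2, (p.2.1, p.1 - p.2.1)⟩)
  · rintro ⟨k, i0, j0⟩ ha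
    simp only [Finset.mem_sigma, Finset.mem_product, Finset.mem_range] at *
    omega
  · rintro ⟨k, i0, j0⟩ ha
    simp only [Finset.mem_sigma, Finset.mem_product, Finset.mem_range] at *
    omega
  · rintro ⟨k, i0, j0⟩ ha
    simp only [Finset.mem_sigma, Finset.mem_product, Finset.mem_range] at ha
    have h1 : i0 + (k - i0) = k := by omega
    have h2 : i0 + j0 - i0 = j0 := by omega
    simp [h1, h2]
  · rintro ⟨k, i0, j0⟩ ha
    simp only [Finset.mem_sigma, Finset.mem_product, Finset.mem_range] at ha
    have h1 : i0 + (k - i0) = k := by omega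
    have h2 : i0 + j0 - i0 = j0 := by omega
    simp [h1, h2]
  · rintro ⟨k, i0, j0⟩ ha
    simp only [Finset.mem_sigma, Finset.mem_product, Finset.mem_range] at ha
    simp only []
    congr 1
    omega

theorem stmt15 (α x : ℝ) (n : ℕ) (p q : ℝ) :
    ∑ k ∈ Finset.range (n + 1), lag (α + p) k x * lag (-α - q) (n - k) (-x) =
      poch (p - q + 2) n / n.factorial := by
  set a : ℝ := α + p with ha
  set b : ℝ := -α - q with hb
  set F : ℕ → ℕ → ℕ → ℝ := fun i r j =>
    ((-1:ℝ)^i * (poch (a+i+1) r / r.factorial) * x^i / i.factorial)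
      * (poch (b+j+1) (n-i-r-j) / (n-i-r-j).factorial * x^j / j.factorial) with hF
  have step1 : ∀ k ∈ range (n+1),
      lag a k x * lag b (n-k) (-x)
      = ∑ i ∈ range (k+1), ∑ j ∈ range (n-k+1), F i (k-i) j := by
    intro k hk
    have hk' : k ≤ n := Nat.lt_succ_iff.mp (mem_range.mp hk)
    unfold lag
    rw [Finset.sum_mul_sum]
    apply Finset.sum_congr rfl; intro i hi
    apply Finset.sum_congr rfl; intro j hj
    have hik : i ≤ k := Nat.lt_succ_iff.mp (mem_range.mp hi)
    have hjnk : j ≤ n - k := Nat.lt_succ_iff.mp (mem_range.mp hj)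
    have hsub : n - i - (k - i) - j = n - k - j := by omega
    have hsgn : (-1:ℝ)^j * (-x)^j = x^j := by
      rw [← mul_pow, neg_one_mul, neg_neg]
    simp only [hF, hsub]
    linear_combination ((-1:ℝ)^i * (poch (a+i+1) (k-i) / (k-i).factorial) * x^i / i.factorial)
      * (poch (b+j+1) (n-k-j) / (n-k-j).factorial / j.factorial) * hsgn
  rw [Finset.sum_congr rfl step1, tri n F]
  have step3 : ∀ m ∈ range (n+1),
      ∑ i ∈ range (m+1), ∑ r ∈ range (n-m+1), F i r (m-i)
      = x^m * (poch (a+b+m+2) (n-m) / (n-m).factorial) * ((if m = 0 then 1 else 0) / m.factorial) := by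
    intro m hm
    have hm' : m ≤ n := Nat.lt_succ_iff.mp (mem_range.mp hm)
    have inner : ∀ i ∈ range (m+1),
        ∑ r ∈ range (n-m+1), F i r (m-i)
        = ((-1:ℝ)^i / (i.factorial * (m-i).factorial)) * x^m
            * (poch (a+b+m+2) (n-m) / (n-m).factorial) := by
      intro i hi
      have him : i ≤ m := Nat.lt_succ_iff.mp (mem_range.mp hi)
      have hAB : (a+i+1) + (b+((m-i : ℕ) : ℝ)+1) = a+b+m+2 := by
        have hc : ((m-i : ℕ) : ℝ) = (m : ℝ) - i := by rw [Nat.cast_sub him]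
        rw [hc]; ring
      have hx2 : x^i * x^(m-i) = x^m := by
        rw [← pow_add]; congr 1; omega
      calc ∑ r ∈ range (n-m+1), F i r (m-i)
          = ∑ r ∈ range (n-m+1),
              ((-1:ℝ)^i * x^i / i.factorial * (x^(m-i) / (m-i).factorial))
              * (poch (a+i+1) r / r.factorial
                  * (poch (b+((m-i : ℕ) : ℝ)+1) ((n-m)-r) / ((n-m)-r).factorial)) := by
            apply Finset.sum_congr rfl; intro r hr
            have h1 : n - i - r - (m - i) = n - m - r := by omega
            simp only [hF, h1]
            ring
        _ = ((-1:ℝ)^i * x^i / i.factorial * (x^(m-i) / (m-i).factorial))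
              * (poch ((a+i+1)+(b+((m-i : ℕ) : ℝ)+1)) (n-m) / (n-m).factorial) := by
            rw [← Finset.mul_sum, vand]
        _ = ((-1:ℝ)^i / (i.factorial * (m-i).factorial)) * x^m
              * (poch (a+b+m+2) (n-m) / (n-m).factorial) := by
            rw [hAB, ← hx2]; ring
    rw [Finset.sum_congr rfl inner]
    have hgather : ∑ i ∈ range (m+1),
        ((-1:ℝ)^i / (i.factorial * (m-i).factorial)) * x^m
          * (poch (a+b+m+2) (n-m) / (n-m).factorial)
        = (∑ i ∈ range (m+1), (-1:ℝ)^i / (i.factorial * (m-i).factorial))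
          * x^m * (poch (a+b+m+2) (n-m) / (n-m).factorial) := by
      rw [Finset.sum_mul, Finset.sum_mul]
    rw [hgather, alt]
    ring
  rw [Finset.sum_congr rfl step3]
  rw [Finset.sum_eq_single_of_mem 0 (by simp : (0:ℕ) ∈ range (n+1))]
  · have h02 : a + b + ((0:ℕ) : ℝ) + 2 = p - q + 2 := by
      rw [ha, hb]; push_cast; ring
    rw [h02]
    simp
  · intro m _ hm0
    simp [hm0]
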